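/- arXiv:2405.01947 — 3 statements merged into one kernel-verified Lean document; each statement's English description precedes it below -/
import Mathlib

section
/- Define Π_N : ℝ → ℝ by Π_N(s) = s·ln s for s ≥ 1/N, and Π_N(s) = Σ_{j=0}^{4} (1/j!)·Π^{(j)}(1/N)·(s − 1/N)^j for s ≤ 1/N, where Π(s) = s·ln s. Then there exists a constant d₁ ≥ 0, independent of N, such that Π_N(s) ≥ −d₁ for all s ∈ ℝ and all N ≥ 1. -/
/-- The fourth-order Taylor regularization of Π(s) = s·ln s at 1/N:
`PiN N s = s ln s` for `s ≥ 1/N`, and for `s ≤ 1/N` the degree-4 Taylor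
polynomial of `s ln s` at `1/N` (using Π'(a) = 1 + ln a, Π''(a) = 1/a,
Π'''(a) = −1/a², Π⁽⁴⁾(a) = 2/a³). -/
noncomputable def PiN (N : ℕ) (s : ℝ) : ℝ :=
  if (1 : ℝ) / (N : ℝ) ≤ s then s * Real.log s
  else (1 / (N : ℝ)) * Real.log (1 / (N : ℝ))
    + (1 + Real.log (1 / (N : ℝ))) * (s - 1 / (N : ℝ))
    + ((N : ℝ) / 2) * (s - 1 / (N : ℝ))^2
    - ((N : ℝ)^2 / 6) * (s - 1 / (N : ℝ))^3
    + ((N : ℝ)^3 / 12) * (s - 1 / (N : ℝ))^4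

lemma mul_log_ge_neg_one {s : ℝ} (hs : 0 < s) : s * Real.log s ≥ -1 := by
  have h := Real.log_le_sub_one_of_pos (x := 1 / s) (by positivity)
  rw [Real.log_div one_ne_zero (ne_of_gt hs), Real.log_one] at h
  -- h : 0 - log s ≤ 1/s - 1
  have h2 : 1 - 1 / s ≤ Real.log s := by linarith
  have h3 : s * (1 - 1 / s) ≤ s * Real.log s :=
    mul_le_mul_of_nonneg_left h2 (le_of_lt hs)
  have h4 : s * (1 - 1 / s) = s - 1 := by field_simp
  linarith

/-- There exists d₁ ≥ 0, independent of N, with Π_N(s) ≥ −d₁ for all s and N ≥ 1. -/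
theorem stmt_2 :
    ∃ d₁ : ℝ, 0 ≤ d₁ ∧ ∀ N : ℕ, 1 ≤ N → ∀ s : ℝ, PiN N s ≥ -d₁ := by
  refine ⟨2, by norm_num, fun N hN s => ?_⟩
  have hN1 : (1 : ℝ) ≤ (N : ℝ) := by exact_mod_cast hN
  have hNpos : (0 : ℝ) < (N : ℝ) := by linarith
  unfold PiN
  set a : ℝ := 1 / (N : ℝ) with ha_def
  have ha : 0 < a := by positivity
  have ha1 : a ≤ 1 := by
    rw [ha_def, div_le_one hNpos]; exact hN1
  have hla : Real.log a ≤ 0 := Real.log_nonpos (le_of_lt ha) ha1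
  have hal : a * Real.log a ≥ -1 := mul_log_ge_neg_one ha
  have hal0 : a * Real.log a ≤ 0 := mul_nonpos_of_nonneg_of_nonpos (le_of_lt ha) hla
  split_ifs with h
  · -- s ≥ a > 0
    have hs : 0 < s := lt_of_lt_of_le ha h
    have := mul_log_ge_neg_one hs
    linarith
  · have h : s < a := lt_of_not_ge h
    set x : ℝ := (N : ℝ) * (s - a) with hx_def
    have haN : a * (N : ℝ) = 1 := by rw [ha_def]; field_simp
    have hx0 : x ≤ 0 := by
      have : s - a ≤ 0 := by linarith
      exact mul_nonpos_of_nonneg_of_nonpos (le_of_lt hNpos) this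
    have hrw : a * Real.log a
        + (1 + Real.log a) * (s - a)
        + ((N : ℝ) / 2) * (s - a)^2
        - ((N : ℝ)^2 / 6) * (s - a)^3
        + ((N : ℝ)^3 / 12) * (s - a)^4
        = a * Real.log a * (1 + x)
          + a * (x + x^2/2 - x^3/6 + x^4/12) := by
      have hsa : s - a = a * x := by
        rw [hx_def, ha_def]; field_simp
      rw [hsa, ha_def]
      field_simp
      ring
    clear_value x a
    rw [hrw]
    have hx3 : x^3 ≤ 0 := Odd.pow_nonpos ⟨1, by norm_num⟩ hx0
    have hg : x + x^2/2 - x^3/6 + x^4/12 ≥ -(1/2) := by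
      nlinarith [sq_nonneg (x + 1), sq_nonneg (x^2), sq_nonneg x]
    have h2 : a * (x + x^2/2 - x^3/6 + x^4/12) ≥ -(1/2) := by
      nlinarith
    have h1 : a * Real.log a * (1 + x) ≥ -1 := by
      rcases le_or_gt 0 (1 + x) with hpx | hpx
      · have hle1 : 1 + x ≤ 1 := by linarith
        nlinarith
      · nlinarith [mul_nonneg (neg_nonneg.mpr hal0) (neg_nonneg.mpr hpx.le)]
    linarith
end

section
/- With Π_N the fourth-order Taylor regularization of s·ln s at 1/N and F₀^N(r,s) := θ·[Π_N(½(1+r−s)) + Π_N(½(1−r−s)) + Π_N(s)] for θ > 0, there exist constants d₄ > 0 and d₅ ≥ 0, independent of N, such that F₀^N(r,s) ≥ d₄·(|r|⁴ + |s|⁴) − d₅ for all r, s ∈ ℝ. -/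
/-- Global lower bound for the regularized entropy. -/
lemma PiN_lower (N : ℕ) (hN : 1 ≤ N) (x : ℝ) :
    (max 0 (-x))^4 / 12 - 2 ≤ PiN N x := by
  have hn : (1 : ℝ) ≤ (N : ℝ) := by exact_mod_cast hN
  have hn0 : (0 : ℝ) < (N : ℝ) := by linarith
  unfold PiN
  split_ifs with h
  · -- x ≥ 1/N > 0
    have hx : 0 < x := lt_of_lt_of_le (by positivity) h
    have hm : max 0 (-x) = 0 := max_eq_left (by linarith)
    rw [hm]
    have hlog : Real.log x⁻¹ ≤ x⁻¹ - 1 := Real.log_le_sub_one_of_pos (by positivity)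
    rw [Real.log_inv] at hlog
    have : 1 - x⁻¹ ≤ Real.log x := by linarith
    have h2 : x * (1 - x⁻¹) ≤ x * Real.log x :=
      mul_le_mul_of_nonneg_left this (le_of_lt hx)
    have h3 : x * (1 - x⁻¹) = x - 1 := by field_simp
    norm_num
    nlinarith [h2, h3, hx.le]
  · -- x < 1/N
    push_neg at h
    rw [one_div, Real.log_inv]
    have hlogn : 0 ≤ Real.log (N : ℝ) := Real.log_nonneg hn
    have hlognN : Real.log (N : ℝ) ≤ (N : ℝ) := by
      have := Real.log_le_sub_one_of_pos hn0
      linarith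
    have hinv : (0:ℝ) < ((N : ℝ))⁻¹ := by positivity
    have hx1 : x < ((N : ℝ))⁻¹ := by rw [← one_div]; exact h
    obtain ⟨t, ht⟩ : ∃ t : ℝ, t = x - ((N : ℝ))⁻¹ := ⟨_, rfl⟩
    rw [← ht]
    have htneg : t < 0 := by rw [ht]; linarith
    have hconst : -1 ≤ ((N : ℝ))⁻¹ * (-Real.log (N : ℝ)) := by
      have h1 : ((N : ℝ))⁻¹ * Real.log (N : ℝ) ≤ ((N : ℝ))⁻¹ * (N : ℝ) :=
        mul_le_mul_of_nonneg_left hlognN (by positivity)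
      have h2 : ((N : ℝ))⁻¹ * (N : ℝ) = 1 := inv_mul_cancel₀ hn0.ne'
      nlinarith [h1, h2]
    have hlin : t ≤ (1 + -Real.log (N : ℝ)) * t := by
      have : 0 ≤ (-t) * Real.log (N : ℝ) := mul_nonneg (by linarith) hlogn
      nlinarith
    have hsq : t^2 / 2 ≤ ((N : ℝ) / 2) * t^2 := by nlinarith [sq_nonneg t]
    have hcub : 0 ≤ -(((N : ℝ))^2 / 6 * t^3) := by nlinarith [sq_nonneg (N : ℝ), sq_nonneg t]
    have hquart : t^4 / 12 ≤ ((N : ℝ))^3 / 12 * t^4 := by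
      have h1 : (1:ℝ) ≤ (N : ℝ)^3 := one_le_pow₀ hn
      have h2 : 0 ≤ ((N : ℝ)^3 - 1) * t^4 :=
        mul_nonneg (by linarith) (by positivity)
      nlinarith [h2]
    have hm4 : (max 0 (-x))^4 ≤ t^4 := by
      rcases le_or_gt x 0 with hx | hx
      · have hm : max 0 (-x) = -x := max_eq_right (by linarith)
        rw [hm]
        have htx : t ≤ x := by rw [ht]; linarith
        have h4 : (-x)^4 ≤ (-t)^4 :=
          pow_le_pow_left₀ (by linarith) (by linarith) 4
        have h5 : (-t)^4 = t^4 := by ring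
        linarith
      · have hm : max 0 (-x) = 0 := max_eq_left (by linarith)
        rw [hm]
        have h0 : (0:ℝ)^4 = 0 := by norm_num
        rw [h0]
        positivity
    nlinarith [hconst, hlin, hsq, hcub, hquart, hm4, sq_nonneg (t + 1)]

/-- power-mean type inequality. -/
lemma pow4_add (x y : ℝ) : (x + y)^4 ≤ 8 * (x^4 + y^4) := by
  nlinarith [sq_nonneg (x - y), sq_nonneg (x + y), sq_nonneg (x^2 - y^2), sq_nonneg (x^2 + y^2)]

lemma shift_pow4 (u : ℝ) (hu : 1 ≤ u) : u^4 ≤ 16 * (u - 1)^4 + 16 := by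
  nlinarith [sq_nonneg (u - 2), sq_nonneg ((u-1)*(u-2)), sq_nonneg (u - 1), sq_nonneg u]

/-- Key algebraic claim: negative parts control r⁴ + s⁴. -/
lemma claimC (r s A B C : ℝ) (hA0 : 0 ≤ A) (hB0 : 0 ≤ B) (hC0 : 0 ≤ C)
    (hA : (s - r - 1)/2 ≤ A) (hB : (s + r - 1)/2 ≤ B) (hC : -s ≤ C) :
    (r^4 + s^4) / 4096 - 1 ≤ A^4 + B^4 + C^4 := by
  have hA4 : 0 ≤ A^4 := by positivity
  have hB4 : 0 ≤ B^4 := by positivity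
  have hC4 : 0 ≤ C^4 := by positivity
  have h1 : s^4 / 256 - 1 ≤ A^4 + B^4 + C^4 := by
    rcases le_or_gt 1 s with hs | hs
    · -- A + B ≥ s - 1 ≥ 0
      have hAB : s - 1 ≤ A + B := by linarith
      have e1 : (s-1)^4 ≤ (A+B)^4 := pow_le_pow_left₀ (by linarith) hAB 4
      have e2 : (A+B)^4 ≤ 8*(A^4+B^4) := pow4_add A B
      have e3 : s^4 ≤ 16*(s-1)^4 + 16 := shift_pow4 s hs
      linarith
    rcases le_or_gt s (-1) with hs' | hs'
    · have hC1 : 1 ≤ C := by linarith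
      have e1 : (-s)^4 ≤ C^4 := pow_le_pow_left₀ (by linarith) hC 4
      have : s^4 ≤ C^4 := by nlinarith [e1]
      linarith
    · -- |s| < 1
      have h2 : s^2 ≤ 1 := by nlinarith
      have : s^4 ≤ 1 := by nlinarith [h2, sq_nonneg s]
      linarith
  have h2 : r^4 / 2048 - 1 ≤ A^4 + B^4 + C^4 := by
    rcases le_or_gt 1 r with hr | hr
    · -- 2B + C ≥ r - 1 ≥ 0
      have hBC : r - 1 ≤ 2*B + C := by linarith
      have e1 : (r-1)^4 ≤ (2*B + C)^4 := pow_le_pow_left₀ (by linarith) hBC 4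
      have e2 : (2*B + C)^4 ≤ 8*((2*B)^4 + C^4) := pow4_add (2*B) C
      have e3 : r^4 ≤ 16*(r-1)^4 + 16 := shift_pow4 r hr
      have e4 : (2*B)^4 = 16*B^4 := by ring
      linarith
    rcases le_or_gt r (-1) with hr' | hr'
    · have hAC : -r - 1 ≤ 2*A + C := by linarith
      have e1 : (-r-1)^4 ≤ (2*A + C)^4 := pow_le_pow_left₀ (by linarith) hAC 4
      have e2 : (2*A + C)^4 ≤ 8*((2*A)^4 + C^4) := pow4_add (2*A) C
      have e3 : (-r)^4 ≤ 16*(-r-1)^4 + 16 := shift_pow4 (-r) (by linarith)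
      have e4 : (2*A)^4 = 16*A^4 := by ring
      have e5 : (-r)^4 = r^4 := by ring
      linarith
    · have h2 : r^2 ≤ 1 := by nlinarith
      have : r^4 ≤ 1 := by nlinarith [h2, sq_nonneg r]
      linarith
  linarith

/-- For F₀^N(r,s) = θ[Π_N(½(1+r−s)) + Π_N(½(1−r−s)) + Π_N(s)] with θ > 0, there
are d₄ > 0, d₅ ≥ 0 independent of N with F₀^N(r,s) ≥ d₄(|r|⁴ + |s|⁴) − d₅. -/
theorem stmt_7 :
    ∀ θ : ℝ, 0 < θ →
      ∃ d₄ : ℝ, 0 < d₄ ∧ ∃ d₅ : ℝ, 0 ≤ d₅ ∧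
        ∀ N : ℕ, 1 ≤ N → ∀ r s : ℝ,
          θ * (PiN N ((1 + r - s) / 2) + PiN N ((1 - r - s) / 2) + PiN N s) ≥
            d₄ * (|r|^4 + |s|^4) - d₅ := by
  intro θ hθ
  refine ⟨θ / 49152, by positivity, 7 * θ, by positivity, ?_⟩
  intro N hN r s
  set A : ℝ := max 0 (-((1 + r - s) / 2)) with hA
  set B : ℝ := max 0 (-((1 - r - s) / 2)) with hB
  set C : ℝ := max 0 (-s) with hC
  have lA := PiN_lower N hN ((1 + r - s) / 2)
  have lB := PiN_lower N hN ((1 - r - s) / 2)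
  have lC := PiN_lower N hN s
  rw [← hA] at lA; rw [← hB] at lB; rw [← hC] at lC
  have key : (r^4 + s^4) / 4096 - 1 ≤ A^4 + B^4 + C^4 :=
    claimC r s A B C (le_max_left _ _) (le_max_left _ _) (le_max_left _ _)
      (by rw [hA]; apply le_trans _ (le_max_right _ _); linarith)
      (by rw [hB]; apply le_trans _ (le_max_right _ _); linarith)
      (by rw [hC]; exact le_max_right _ _)
  have habsr : |r|^4 = r^4 := by rw [pow_abs, abs_of_nonneg (by positivity)]
  have habss : |s|^4 = s^4 := by rw [pow_abs, abs_of_nonneg (by positivity)]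
  rw [habsr, habss, ge_iff_le]
  have hsum : (A^4 + B^4 + C^4)/12 - 6 ≤
      PiN N ((1 + r - s) / 2) + PiN N ((1 - r - s) / 2) + PiN N s := by linarith
  have hmul : θ * ((A^4 + B^4 + C^4)/12 - 6) ≤
      θ * (PiN N ((1 + r - s) / 2) + PiN N ((1 - r - s) / 2) + PiN N s) :=
    mul_le_mul_of_nonneg_left hsum hθ.le
  have hfin : θ / 49152 * (r^4 + s^4) - 7 * θ ≤ θ * ((A^4 + B^4 + C^4)/12 - 6) := by
    have := mul_le_mul_of_nonneg_left key hθ.le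
    nlinarith [this]
  linarith
end

section
/- Let α ≥ 0, γ ≥ 0, g, δ ∈ ℝ, and set C_F = max(0, (3/2)|δ| − α, |δ| + |g| − γ). Define F₁⁻(φ,ψ) = −(α/2)φ² − (g/3)(ψ−½)³ − (γ/2)(ψ−½)² + (δ/2)φ²(ψ−½) − (C_F/2)(φ² + ψ²). Then for every (φ,ψ) in the triangle 𝒦 with vertices (−1,0), (1,0), (0,1), the Hessian H of F₁⁻ at (φ,ψ) satisfies tr H ≤ 0 and det H ≥ 0; hence F₁⁻ is concave on 𝒦. -/
/-- Bounds on the diagonal Hessian entries on 𝒦. -/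
private lemma hess_bounds (α γ g δ CF ψ : ℝ)
    (hCF : CF = max 0 (max ((3 / 2) * |δ| - α) (|δ| + |g| - γ)))
    (hψ0 : 0 ≤ ψ) (hψ1 : ψ ≤ 1) :
    |δ| ≤ α + CF - δ * (ψ - 1 / 2) ∧ |δ| ≤ γ + 2 * g * (ψ - 1 / 2) + CF := by
  have hCF1 : (3 / 2) * |δ| - α ≤ CF := by
    rw [hCF]; exact le_max_of_le_right (le_max_left _ _)
  have hCF2 : |δ| + |g| - γ ≤ CF := by
    rw [hCF]; exact le_max_of_le_right (le_max_right _ _)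
  have hu : |ψ - 1 / 2| ≤ 1 / 2 := abs_le.mpr ⟨by linarith, by linarith⟩
  have hd1 : δ * (ψ - 1 / 2) ≤ |δ| / 2 := by
    calc δ * (ψ - 1 / 2) ≤ |δ * (ψ - 1 / 2)| := le_abs_self _
      _ = |δ| * |ψ - 1 / 2| := abs_mul _ _
      _ ≤ |δ| * (1 / 2) := mul_le_mul_of_nonneg_left hu (abs_nonneg δ)
      _ = |δ| / 2 := by ring
  have hg1 : -(|g|) ≤ 2 * g * (ψ - 1 / 2) := by
    have h1 : |2 * g * (ψ - 1 / 2)| ≤ |g| := by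
      rw [abs_mul, abs_mul]
      have : |(2:ℝ)| = 2 := by norm_num
      rw [this]
      nlinarith [abs_nonneg g, hu]
    linarith [neg_abs_le (2 * g * (ψ - 1 / 2))]
  exact ⟨by linarith, by linarith⟩

/-- The Hessian quadratic form is nonpositive on 𝒦. -/
private lemma quadA (α γ g δ CF φ ψ v₁ v₂ : ℝ)
    (hCF : CF = max 0 (max ((3 / 2) * |δ| - α) (|δ| + |g| - γ)))
    (hφ : |φ| ≤ 1) (hψ0 : 0 ≤ ψ) (hs : φ + ψ ≤ 1) (hd : ψ - φ ≤ 1) :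
    (-α - CF + δ * (ψ - 1 / 2)) * v₁ ^ 2 + 2 * (δ * φ) * (v₁ * v₂)
      + (-γ - 2 * g * (ψ - 1 / 2) - CF) * v₂ ^ 2 ≤ 0 := by
  have hψ1 : ψ ≤ 1 := by
    obtain ⟨h1, h2⟩ := abs_le.mp hφ; linarith
  obtain ⟨hA, hB⟩ := hess_bounds α γ g δ CF ψ hCF hψ0 hψ1
  have he : |δ * φ| ≤ |δ| := by
    rw [abs_mul]; nlinarith [abs_nonneg δ, abs_nonneg φ]
  have he1 : δ * φ ≤ |δ| := le_trans (le_abs_self _) he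
  have he2 : -(|δ|) ≤ δ * φ := by linarith [neg_abs_le (δ * φ), neg_le_neg he]
  nlinarith [mul_nonneg (by linarith : (0:ℝ) ≤ |δ| + δ * φ) (sq_nonneg (v₁ - v₂)),
    mul_nonneg (by linarith : (0:ℝ) ≤ |δ| - δ * φ) (sq_nonneg (v₁ + v₂)),
    mul_nonneg (by linarith : (0:ℝ) ≤ α + CF - δ * (ψ - 1 / 2) - |δ|) (sq_nonneg v₁),
    mul_nonneg (by linarith : (0:ℝ) ≤ γ + 2 * g * (ψ - 1 / 2) + CF - |δ|) (sq_nonneg v₂)]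

/-- Points on segments stay in 𝒦. -/
private lemma inK (x1 x2 y1 y2 u : ℝ) (hx1 : |x1| ≤ 1) (hx2 : 0 ≤ x2)
    (hx3 : x1 + x2 ≤ 1) (hx4 : x2 - x1 ≤ 1)
    (hy1 : |y1| ≤ 1) (hy2 : 0 ≤ y2) (hy3 : y1 + y2 ≤ 1) (hy4 : y2 - y1 ≤ 1)
    (hu0 : 0 ≤ u) (hu1 : u ≤ 1) :
    |x1 + u * (y1 - x1)| ≤ 1 ∧ 0 ≤ x2 + u * (y2 - x2) ∧
      (x1 + u * (y1 - x1)) + (x2 + u * (y2 - x2)) ≤ 1 ∧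
      (x2 + u * (y2 - x2)) - (x1 + u * (y1 - x1)) ≤ 1 := by
  obtain ⟨ha, hb⟩ := abs_le.mp hx1
  obtain ⟨hc, hd⟩ := abs_le.mp hy1
  refine ⟨abs_le.mpr ⟨by nlinarith, by nlinarith⟩, by nlinarith, by nlinarith, by nlinarith⟩

/-- Concavity of a cubic from nonpositivity of its second derivative. -/
private lemma cubic_concave (c0 c1 c2 c3 : ℝ)
    (h : ∀ u : ℝ, 0 ≤ u → u ≤ 1 → 2 * c2 + 6 * c3 * u ≤ 0) :
    ∀ s : ℝ, 0 ≤ s → s ≤ 1 → ∀ t : ℝ, 0 ≤ t → t ≤ 1 → ∀ b : ℝ, 0 ≤ b → b ≤ 1 →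
      (1 - b) * (c0 + c1 * s + c2 * s ^ 2 + c3 * s ^ 3)
        + b * (c0 + c1 * t + c2 * t ^ 2 + c3 * t ^ 3)
      ≤ c0 + c1 * ((1 - b) * s + b * t) + c2 * ((1 - b) * s + b * t) ^ 2
        + c3 * ((1 - b) * s + b * t) ^ 3 := by
  intro s hs0 hs1 t ht0 ht1 b hb0 hb1
  have hm0 : 0 ≤ (1 - b) * s + b * t := by nlinarith
  have hm1 : (1 - b) * s + b * t ≤ 1 := by nlinarith
  have hw := h ((s + t + ((1 - b) * s + b * t)) / 3) (by linarith) (by linarith)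
  have hkey : c0 + c1 * ((1 - b) * s + b * t) + c2 * ((1 - b) * s + b * t) ^ 2
        + c3 * ((1 - b) * s + b * t) ^ 3
      - ((1 - b) * (c0 + c1 * s + c2 * s ^ 2 + c3 * s ^ 3)
        + b * (c0 + c1 * t + c2 * t ^ 2 + c3 * t ^ 3))
      = (1 - b) * b * (s - t) ^ 2
          * (-(c2 + c3 * (s + t + ((1 - b) * s + b * t)))) := by ring
  have h2 : 0 ≤ (1 - b) * b * (s - t) ^ 2
      * (-(c2 + c3 * (s + t + ((1 - b) * s + b * t)))) := by
    apply mul_nonneg (mul_nonneg (mul_nonneg (by linarith) hb0) (sq_nonneg _))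
    nlinarith [hw]
  linarith [hkey.ge, h2]

set_option maxHeartbeats 1000000 in
/-- With C_F = max(0, (3/2)|δ| − α, |δ| + |g| − γ), the Hessian of
F₁⁻(φ,ψ) = −(α/2)φ² − (g/3)(ψ−½)³ − (γ/2)(ψ−½)² + (δ/2)φ²(ψ−½) − (C_F/2)(φ²+ψ²)
has nonpositive trace and nonnegative determinant on the triangle 𝒦, and F₁⁻ is
concave on 𝒦. -/
theorem stmt_14 (α γ g δ CF : ℝ) (hα : 0 ≤ α) (hγ : 0 ≤ γ)
    (hCF : CF = max 0 (max ((3 / 2) * |δ| - α) (|δ| + |g| - γ))) :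
    (∀ φ ψ : ℝ, |φ| ≤ 1 → 0 ≤ ψ → φ + ψ ≤ 1 → ψ - φ ≤ 1 →
      ((-α - CF + δ * (ψ - 1 / 2)) + (-γ - 2 * g * (ψ - 1 / 2) - CF) ≤ 0 ∧
        (-α - CF + δ * (ψ - 1 / 2)) * (-γ - 2 * g * (ψ - 1 / 2) - CF)
          - (δ * φ)^2 ≥ 0)) ∧
    ConcaveOn ℝ
      {p : ℝ × ℝ | |p.1| ≤ 1 ∧ 0 ≤ p.2 ∧ p.1 + p.2 ≤ 1 ∧ p.2 - p.1 ≤ 1}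
      (fun p => -(α / 2) * p.1^2 - (g / 3) * (p.2 - 1 / 2)^3
        - (γ / 2) * (p.2 - 1 / 2)^2 + (δ / 2) * p.1^2 * (p.2 - 1 / 2)
        - (CF / 2) * (p.1^2 + p.2^2)) := by
  constructor
  · intro φ ψ hφ hψ0 h1 h2
    have hψ1 : ψ ≤ 1 := by
      obtain ⟨ha', hb'⟩ := abs_le.mp hφ; linarith
    obtain ⟨hA, hB⟩ := hess_bounds α γ g δ CF ψ hCF hψ0 hψ1
    have hd0 : (0:ℝ) ≤ |δ| := abs_nonneg δ
    constructor
    · linarith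
    · have hφ2 : φ ^ 2 ≤ 1 := by
        obtain ⟨ha', hb'⟩ := abs_le.mp hφ; nlinarith
      have hdd : |δ| * |δ| ≤ (α + CF - δ * (ψ - 1 / 2)) * (γ + 2 * g * (ψ - 1 / 2) + CF) :=
        mul_le_mul hA hB hd0 (le_trans hd0 hA)
      have hsq : δ ^ 2 = |δ| * |δ| := by rw [← sq_abs δ]; ring
      nlinarith [sq_nonneg δ]
  · have hconv : Convex ℝ {p : ℝ × ℝ | |p.1| ≤ 1 ∧ 0 ≤ p.2 ∧ p.1 + p.2 ≤ 1 ∧ p.2 - p.1 ≤ 1} := by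
      intro p hp q hq a b ha hb hab
      simp only [Set.mem_setOf_eq] at hp hq ⊢
      obtain ⟨hp1, hp2, hp3, hp4⟩ := hp
      obtain ⟨hq1, hq2, hq3, hq4⟩ := hq
      obtain ⟨hp1a, hp1b⟩ := abs_le.mp hp1
      obtain ⟨hq1a, hq1b⟩ := abs_le.mp hq1
      simp only [Prod.fst_add, Prod.snd_add, Prod.smul_fst, Prod.smul_snd, smul_eq_mul]
      refine ⟨abs_le.mpr ⟨by nlinarith, by nlinarith⟩, by nlinarith, by nlinarith, by nlinarith⟩
    refine ⟨hconv, ?_⟩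
    rintro ⟨x1, x2⟩ hx ⟨y1, y2⟩ hy a b ha hb hab
    simp only [Set.mem_setOf_eq] at hx hy
    obtain ⟨hx1, hx2, hx3, hx4⟩ := hx
    obtain ⟨hy1, hy2, hy3, hy4⟩ := hy
    obtain rfl : a = 1 - b := by linarith
    have hb1 : b ≤ 1 := by linarith
    have hQ : ∀ u : ℝ, 0 ≤ u → u ≤ 1 →
        2 * ((-α / 2 - CF / 2 + δ / 2 * (x2 - 1 / 2)) * (y1 - x1) ^ 2
          + δ * x1 * ((y1 - x1) * (y2 - x2))
          + (-g * (x2 - 1 / 2) - γ / 2 - CF / 2) * (y2 - x2) ^ 2)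
        + 6 * (δ / 2 * (y1 - x1) ^ 2 * (y2 - x2) - g / 3 * (y2 - x2) ^ 3) * u ≤ 0 := by
      intro u hu0 hu1
      obtain ⟨hz1, hz2, hz3, hz4⟩ :=
        inK x1 x2 y1 y2 u hx1 hx2 hx3 hx4 hy1 hy2 hy3 hy4 hu0 hu1
      have hq := quadA α γ g δ CF (x1 + u * (y1 - x1)) (x2 + u * (y2 - x2))
        (y1 - x1) (y2 - x2) hCF hz1 hz2 hz3 hz4
      nlinarith [hq]
    have key := cubic_concave
      (-(α / 2) * x1 ^ 2 - (g / 3) * (x2 - 1 / 2) ^ 3 - (γ / 2) * (x2 - 1 / 2) ^ 2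
        + (δ / 2) * x1 ^ 2 * (x2 - 1 / 2) - (CF / 2) * (x1 ^ 2 + x2 ^ 2))
      ((-(α / 2) * y1 ^ 2 - (g / 3) * (y2 - 1 / 2) ^ 3 - (γ / 2) * (y2 - 1 / 2) ^ 2
        + (δ / 2) * y1 ^ 2 * (y2 - 1 / 2) - (CF / 2) * (y1 ^ 2 + y2 ^ 2))
        - (-(α / 2) * x1 ^ 2 - (g / 3) * (x2 - 1 / 2) ^ 3 - (γ / 2) * (x2 - 1 / 2) ^ 2
        + (δ / 2) * x1 ^ 2 * (x2 - 1 / 2) - (CF / 2) * (x1 ^ 2 + x2 ^ 2))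
        - ((-α / 2 - CF / 2 + δ / 2 * (x2 - 1 / 2)) * (y1 - x1) ^ 2
          + δ * x1 * ((y1 - x1) * (y2 - x2))
          + (-g * (x2 - 1 / 2) - γ / 2 - CF / 2) * (y2 - x2) ^ 2)
        - (δ / 2 * (y1 - x1) ^ 2 * (y2 - x2) - g / 3 * (y2 - x2) ^ 3))
      ((-α / 2 - CF / 2 + δ / 2 * (x2 - 1 / 2)) * (y1 - x1) ^ 2
        + δ * x1 * ((y1 - x1) * (y2 - x2))
        + (-g * (x2 - 1 / 2) - γ / 2 - CF / 2) * (y2 - x2) ^ 2)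
      (δ / 2 * (y1 - x1) ^ 2 * (y2 - x2) - g / 3 * (y2 - x2) ^ 3)
      hQ 0 le_rfl zero_le_one 1 zero_le_one le_rfl b hb hb1
    simp only [Prod.smul_mk, Prod.mk_add_mk, smul_eq_mul]
    nlinarith [key]
end
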